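/- Let f : V → V' be a linear map of real inner product spaces such that ⟨f(x),f(x)⟩' ≤ a⟨x,x⟩ for all x ∈ V and some constant a > 0. Let Λ = {v_1,...,v_n} be linearly independent in V and Λ' = {v'_1,...,v'_m} a basis of f(Span(Λ)). Then for all x ∈ V, Δ_{Λ'}(f(x),f(x)) ≤ a · (det(Λ')/det(Λ)) · Δ_Λ(x,x). -/

import Mathlib

/-- `Δ_Λ(x, x)`, the Gram determinant of the vectors `v 1, …, v n, x`. -/
noncomputable def DeltaQ {V : Type*} [NormedAddCommGroup V] [InnerProductSpace ℝ V]
    {n : ℕ} (v : Fin n → V) (x : V) : ℝ :=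
  (Matrix.of fun i j : Fin (n + 1) =>
    (inner ℝ ((Fin.snoc v x : Fin (n + 1) → V) i) ((Fin.snoc v x : Fin (n + 1) → V) j) : ℝ)).det

/-- The Gram determinant `det(Λ) = det (⟪v i, v j⟫)`. -/
noncomputable def gramDet {V : Type*} [NormedAddCommGroup V] [InnerProductSpace ℝ V]
    {n : ℕ} (v : Fin n → V) : ℝ :=
  (Matrix.of fun i j : Fin n => (inner ℝ (v i) (v j) : ℝ)).det

section Aux

variable {V : Type*} [NormedAddCommGroup V] [InnerProductSpace ℝ V]

open Matrix Finset in
/-- Key factorization: if `y` is a linear combination of the `v i` and `x - y` is orthogonal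
to every `v i`, then `Δ_v(x,x) = det(v) * ⟪x-y, x-y⟫`. -/
lemma deltaQ_eq_aux {n : ℕ} (v : Fin n → V) (x y : V)
    (c : Fin n → ℝ) (hy : ∑ i, c i • v i = y)
    (hz : ∀ i, (inner ℝ (v i) (x - y) : ℝ) = 0) :
    DeltaQ v x = gramDet v * (inner ℝ (x - y) (x - y) : ℝ) := by
  classical
  set w : Fin (n+1) → V := Fin.snoc v x with hw
  set q : ℝ := inner ℝ (x - y) (x - y) with hq
  set G : Matrix (Fin (n+1)) (Fin (n+1)) ℝ :=
    Matrix.of (fun i j => (inner ℝ (w i) (w j) : ℝ)) with hG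
  have hDelta : DeltaQ v x = G.det := rfl
  have hz' : ∀ i, (inner ℝ (x - y) (v i) : ℝ) = 0 := fun i => by
    rw [real_inner_comm]; exact hz i
  have hzy : (inner ℝ (x - y) y : ℝ) = 0 := by
    have hs : (inner ℝ (x - y) (∑ i, c i • v i) : ℝ) = 0 := by
      rw [inner_sum]
      simp [real_inner_smul_right, hz']
    exact hy ▸ hs
  have hzx : (inner ℝ (x - y) x : ℝ) = q := by
    have hx : x = (x - y) + y := by abel
    rw [hq]
    nth_rewrite 2 [hx]
    rw [inner_add_right, hzy, add_zero]
  set Z : Fin (n+1) → ℝ := Pi.single (Fin.last n) q with hZ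
  set G₀ : Matrix (Fin (n+1)) (Fin (n+1)) ℝ := G.updateRow (Fin.last n) Z with hG₀
  set c' : Fin (n+1) → ℝ := Fin.snoc c 0 with hc'
  have hne : ∀ i : Fin n, (Fin.castSucc i) ≠ Fin.last n :=
    fun i => (Fin.castSucc_lt_last i).ne
  have hGcast : ∀ (i : Fin n) (j : Fin (n+1)), G₀ (Fin.castSucc i) j = G (Fin.castSucc i) j :=
    fun i j => by rw [hG₀, Matrix.updateRow_ne (hne i)]
  -- the last row of `G` is `Z` plus the combination of the other rows
  have hrow : G (Fin.last n) = (1 : ℝ) • G₀ (Fin.last n)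
      + ∑ k ∈ Finset.univ.image Fin.castSucc, c' k • G₀ k := by
    funext j
    have hsum : (∑ k ∈ Finset.univ.image Fin.castSucc, c' k • G₀ k) j
        = (inner ℝ y (w j) : ℝ) := by
      rw [Finset.sum_apply]
      rw [Finset.sum_image (fun a _ b _ h => Fin.castSucc_injective n h)]
      have : ∀ i : Fin n, (c' (Fin.castSucc i) • G₀ (Fin.castSucc i)) j
          = c i * (inner ℝ (v i) (w j) : ℝ) := by
        intro i
        rw [hc', Fin.snoc_castSucc, Pi.smul_apply, hGcast]
        simp [hG, hw, Fin.snoc_castSucc]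
      rw [Finset.sum_congr rfl (fun i _ => this i), ← hy, sum_inner]
      simp [real_inner_smul_left]
    have hG₀last : G₀ (Fin.last n) = Z := Matrix.updateRow_self
    rw [Pi.add_apply, hG₀last, one_smul, hsum]
    have hGlast : G (Fin.last n) j = (inner ℝ x (w j) : ℝ) := by
      simp [hG, hw, Fin.snoc_last]
    rw [hGlast]
    have hsub : (inner ℝ x (w j) : ℝ) - (inner ℝ y (w j) : ℝ) = (inner ℝ (x - y) (w j) : ℝ) := by
      rw [inner_sub_left]
    have : (inner ℝ (x - y) (w j) : ℝ) = Z j := by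
      refine Fin.lastCases ?_ ?_ j
      · rw [hw, Fin.snoc_last, hzx, hZ, Pi.single_eq_same]
      · intro i
        rw [hw, Fin.snoc_castSucc, hz' i, hZ, Pi.single_eq_of_ne (hne i)]
    linarith [hsub, this]
  -- hence `det G = det G₀`
  have hGeq : G = G₀.updateRow (Fin.last n)
      ((1 : ℝ) • G₀ (Fin.last n) + ∑ k ∈ Finset.univ.image Fin.castSucc, c' k • G₀ k) := by
    funext i j
    by_cases hi : i = Fin.last n
    · subst hi
      rw [Matrix.updateRow_self, ← hrow]
    · rw [Matrix.updateRow_ne hi, hG₀, Matrix.updateRow_ne hi]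
  have hlast_notmem : Fin.last n ∉ Finset.univ.image Fin.castSucc := by
    simp only [Finset.mem_image, Finset.mem_univ, true_and]
    rintro ⟨i, hi⟩
    exact hne i hi
  have hdet : G.det = G₀.det := by
    rw [hGeq, Matrix.det_updateRow_sum_aux G₀ _ hlast_notmem c' 1, one_smul]
  -- compute `det G₀` by expansion along the last row
  have hsub : G₀.submatrix (Fin.last n).succAbove (Fin.last n).succAbove
      = Matrix.of fun i j : Fin n => (inner ℝ (v i) (v j) : ℝ) := by
    funext i j
    simp only [Matrix.submatrix_apply, Fin.succAbove_last]
    rw [hGcast]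
    simp [hG, hw, Fin.snoc_castSucc]
  have hdet₀ : G₀.det = q * gramDet v := by
    rw [Matrix.det_succ_row G₀ (Fin.last n)]
    rw [Finset.sum_eq_single (Fin.last n)]
    · have h1 : ((-1 : ℝ)) ^ ((Fin.last n : ℕ) + (Fin.last n : ℕ)) = 1 := by
        rw [Fin.val_last, ← two_mul, pow_mul]
        norm_num
      have h2 : G₀ (Fin.last n) (Fin.last n) = q := by
        rw [hG₀, Matrix.updateRow_self, hZ, Pi.single_eq_same]
      rw [h1, h2, hsub, one_mul]
      rfl
    · intro j _ hj
      have : G₀ (Fin.last n) j = 0 := by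
        rw [hG₀, Matrix.updateRow_self, hZ, Pi.single_eq_of_ne hj]
      rw [this, mul_zero, zero_mul]
    · intro h
      exact absurd (Finset.mem_univ _) h
  rw [hDelta, hdet, hdet₀, mul_comm]

/-- Existence of orthogonal decomposition against the span of finitely many vectors. -/
lemma exists_proj_coeffs {n : ℕ} (v : Fin n → V) (x : V) :
    ∃ c : Fin n → ℝ, ∀ i, (inner ℝ (v i) (x - ∑ j, c j • v j) : ℝ) = 0 := by
  classical
  haveI : FiniteDimensional ℝ (Submodule.span ℝ (Set.range v)) :=
    FiniteDimensional.span_of_finite ℝ (Set.finite_range v)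
  set K := Submodule.span ℝ (Set.range v) with hK
  set y : V := (K.orthogonalProjectionOnto x : V) with hy
  obtain ⟨c, hc⟩ := (Submodule.mem_span_range_iff_exists_fun ℝ).mp
    (K.orthogonalProjectionOnto x).2
  refine ⟨c, fun i => ?_⟩
  have hmem : x - ∑ j, c j • v j ∈ Kᗮ := by
    rw [show (∑ j, c j • v j) = y from hc]
    exact Submodule.sub_starProjection_mem_orthogonal (K := K) x
  exact hmem (v i) (Submodule.subset_span ⟨i, rfl⟩)

lemma gramDet_nonneg : ∀ {n : ℕ} (v : Fin n → V), 0 ≤ gramDet v := by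
  intro n
  induction n with
  | zero => intro v; simp [gramDet]
  | succ n ih =>
    intro v
    have h : gramDet v = DeltaQ (Fin.init v) (v (Fin.last n)) := by
      unfold gramDet DeltaQ
      rw [Fin.snoc_init_self]
    obtain ⟨c, hc⟩ := exists_proj_coeffs (Fin.init v) (v (Fin.last n))
    rw [h, deltaQ_eq_aux (Fin.init v) (v (Fin.last n)) _ c rfl hc]
    exact mul_nonneg (ih _) real_inner_self_nonneg

lemma gramDet_pos : ∀ {n : ℕ} {v : Fin n → V}, LinearIndependent ℝ v → 0 < gramDet v := by
  intro n
  induction n with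
  | zero => intro v _; simp [gramDet]
  | succ n ih =>
    intro v hv
    have hsnoc : LinearIndependent ℝ (Fin.snoc (Fin.init v) (v (Fin.last n)) : Fin (n+1) → V) := by
      rwa [Fin.snoc_init_self]
    rw [linearIndependent_fin_snoc] at hsnoc
    obtain ⟨hind, hnot⟩ := hsnoc
    have h : gramDet v = DeltaQ (Fin.init v) (v (Fin.last n)) := by
      unfold gramDet DeltaQ
      rw [Fin.snoc_init_self]
    obtain ⟨c, hc⟩ := exists_proj_coeffs (Fin.init v) (v (Fin.last n))
    rw [h, deltaQ_eq_aux (Fin.init v) (v (Fin.last n)) _ c rfl hc]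
    refine mul_pos (ih hind) ?_
    rw [real_inner_self_eq_norm_sq]
    have hne : v (Fin.last n) - ∑ j, c j • Fin.init v j ≠ 0 := by
      intro h0
      apply hnot
      have : v (Fin.last n) = ∑ j, c j • Fin.init v j := sub_eq_zero.mp h0
      rw [this]
      exact Submodule.sum_mem _ fun j _ =>
        Submodule.smul_mem _ _ (Submodule.subset_span ⟨j, rfl⟩)
    exact pow_pos (norm_pos_iff.mpr hne) 2

end Aux

/-- If `f : V → V'` is linear with `⟪f x, f x⟫' ≤ a ⟪x, x⟫`, `Λ` is linearly independent
in `V`, and `Λ'` is a basis of `f(Span Λ)`, then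
`Δ_{Λ'}(f x, f x) ≤ a · (det Λ' / det Λ) · Δ_Λ(x, x)`. -/
theorem delta_image_le {V V' : Type*}
    [NormedAddCommGroup V] [InnerProductSpace ℝ V]
    [NormedAddCommGroup V'] [InnerProductSpace ℝ V']
    (f : V →ₗ[ℝ] V') (a : ℝ) (ha : 0 < a)
    (hf : ∀ x : V, (inner ℝ (f x) (f x) : ℝ) ≤ a * (inner ℝ x x : ℝ))
    {n m : ℕ} (v : Fin n → V) (hv : LinearIndependent ℝ v)
    (v' : Fin m → V') (hv' : LinearIndependent ℝ v')
    (hspan : Submodule.span ℝ (Set.range v') =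
      Submodule.map f (Submodule.span ℝ (Set.range v)))
    (x : V) :
    DeltaQ v' (f x) ≤ a * (gramDet v' / gramDet v) * DeltaQ v x := by
  classical
  haveI : FiniteDimensional ℝ (Submodule.span ℝ (Set.range v)) :=
    FiniteDimensional.span_of_finite ℝ (Set.finite_range v)
  haveI : FiniteDimensional ℝ (Submodule.span ℝ (Set.range v')) :=
    FiniteDimensional.span_of_finite ℝ (Set.finite_range v')
  set K := Submodule.span ℝ (Set.range v) with hK
  set K' := Submodule.span ℝ (Set.range v') with hK'
  set y : V := (K.orthogonalProjectionOnto x : V) with hy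
  set p : V' := (K'.orthogonalProjectionOnto (f x) : V') with hp
  obtain ⟨c, hc⟩ := (Submodule.mem_span_range_iff_exists_fun ℝ).mp (K.orthogonalProjectionOnto x).2
  obtain ⟨c', hc'⟩ := (Submodule.mem_span_range_iff_exists_fun ℝ).mp
    (K'.orthogonalProjectionOnto (f x)).2
  have h1 : DeltaQ v x = gramDet v * (inner ℝ (x - y) (x - y) : ℝ) :=
    deltaQ_eq_aux v x y c hc (fun i =>
      (Submodule.sub_starProjection_mem_orthogonal (K := K) x) (v i) (Submodule.subset_span ⟨i, rfl⟩))
  have h2 : DeltaQ v' (f x) = gramDet v' * (inner ℝ (f x - p) (f x - p) : ℝ) :=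
    deltaQ_eq_aux v' (f x) p c' hc' (fun i =>
      (Submodule.sub_starProjection_mem_orthogonal (K := K') (f x)) (v' i) (Submodule.subset_span ⟨i, rfl⟩))
  have hgv : 0 < gramDet v := gramDet_pos hv
  have hgv' : 0 < gramDet v' := gramDet_pos hv'
  have hfy : f y ∈ K' := by
    rw [hspan]
    exact ⟨y, (K.orthogonalProjectionOnto x).2, rfl⟩
  have hmin : ‖f x - p‖ ≤ ‖f x - f y‖ := by
    rw [hp, ← Submodule.starProjection_apply, Submodule.starProjection_minimal]
    exact ciInf_le ⟨0, fun b ⟨w, hw⟩ => hw ▸ norm_nonneg _⟩ (⟨f y, hfy⟩ : K')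
  have key : (inner ℝ (f x - p) (f x - p) : ℝ) ≤ a * (inner ℝ (x - y) (x - y) : ℝ) := by
    calc (inner ℝ (f x - p) (f x - p) : ℝ) = ‖f x - p‖ ^ 2 := real_inner_self_eq_norm_sq _
      _ ≤ ‖f x - f y‖ ^ 2 := by
          exact pow_le_pow_left₀ (norm_nonneg _) hmin 2
      _ = (inner ℝ (f (x - y)) (f (x - y)) : ℝ) := by
          rw [map_sub, real_inner_self_eq_norm_sq]
      _ ≤ a * (inner ℝ (x - y) (x - y) : ℝ) := hf _
  rw [h1, h2]
  have heq : a * (gramDet v' / gramDet v) * (gramDet v * (inner ℝ (x - y) (x - y) : ℝ))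
      = gramDet v' * (a * (inner ℝ (x - y) (x - y) : ℝ)) := by
    field_simp
  rw [heq]
  exact mul_le_mul_of_nonneg_left key hgv'.le
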